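/- Let n ≥ 2 and suppose J_n(1) has a unique Jaconian vertex, 𝕁(J_n(1)) = {i}. Then: (a) n ≤ i + f(i), i.e. the arc (v_i, v_n) is present in J_n(1); and (b) Δ(J_n(1)) + d_n(n) = n. -/

import Mathlib

/-- The Jaco out-degree function `f`: `f 0 = 0` and, for `n ≥ 1`,
`f n = n - #{k : 1 ≤ k < n ∧ k + f k ≥ n}` (the out-degree of `v_n` in `J_∞(1)`). -/
def jacoF : ℕ → ℕ
  | 0 => 0
  | n + 1 =>
    (n + 1) - ((Finset.range (n + 1)).attach.filter
      (fun a => 1 ≤ a.1 ∧ n + 1 ≤ a.1 + jacoF a.1)).card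
  decreasing_by all_goals exact Finset.mem_range.mp a.2

/-- The in-degree `d⁻(j) = #{i : 1 ≤ i < j ∧ j ≤ i + f i}` of `v_j` in `J_∞(1)`. -/
def jacoDin (j : ℕ) : ℕ := ((Finset.Ico 1 j).filter (fun i => j ≤ i + jacoF i)).card

/-- The degree `d_n(j) = d⁻(j) + #{k : j < k ≤ n ∧ k ≤ j + f j}` of `v_j` in the
underlying undirected graph of the finite Jaco graph `J_n(1)`. -/
def jacoDeg (n j : ℕ) : ℕ :=
  jacoDin j + ((Finset.Ioc j n).filter (fun k => k ≤ j + jacoF j)).card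

/-- The maximum degree `Δ(J_n(1)) = max_{1 ≤ j ≤ n} d_n(j)`. -/
def jacoDelta (n : ℕ) : ℕ := (Finset.Icc 1 n).sup (jacoDeg n)

/-- The Jaconian set `𝕁(J_n(1)) = {j : 1 ≤ j ≤ n ∧ d_n(j) = Δ(J_n(1))}`. -/
def jacoJ (n : ℕ) : Finset ℕ := (Finset.Icc 1 n).filter (fun j => jacoDeg n j = jacoDelta n)

@[simp] lemma jacoF_zero : jacoF 0 = 0 := by rw [jacoF]

lemma jacoF_succ (n : ℕ) : jacoF (n + 1) = (n + 1) - jacoDin (n + 1) := by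
  rw [jacoF]
  congr 1
  rw [Finset.filter_attach (fun k => 1 ≤ k ∧ n + 1 ≤ k + jacoF k), Finset.card_map,
    Finset.card_attach, jacoDin]
  congr 1
  ext k
  simp only [Finset.mem_filter, Finset.mem_range, Finset.mem_Ico]
  omega

lemma jacoDin_lt (n : ℕ) : jacoDin (n + 1) ≤ n := by
  calc jacoDin (n + 1) ≤ (Finset.Ico 1 (n + 1)).card := Finset.card_filter_le _ _
  _ = n := by simp

lemma jacoF_add_din (n : ℕ) (hn : 1 ≤ n) : jacoF n + jacoDin n = n := by
  obtain ⟨m, rfl⟩ := Nat.exists_eq_add_of_le hn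
  rw [show 1 + m = m + 1 by omega, jacoF_succ]
  have := jacoDin_lt m
  omega

lemma jacoDin_succ_le (k : ℕ) : jacoDin (k + 1) ≤ jacoDin k + 1 := by
  unfold jacoDin
  have hsub : (Finset.Ico 1 (k+1)).filter (fun i => k + 1 ≤ i + jacoF i) ⊆
      insert k ((Finset.Ico 1 k).filter (fun i => k ≤ i + jacoF i)) := by
    intro x hx
    simp only [Finset.mem_filter, Finset.mem_Ico] at hx
    simp only [Finset.mem_insert, Finset.mem_filter, Finset.mem_Ico]
    omega
  calc _ ≤ _ := Finset.card_le_card hsub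
  _ ≤ _ := Finset.card_insert_le _ _

lemma jacoF_le_succ (k : ℕ) : jacoF k ≤ jacoF (k + 1) := by
  rcases Nat.eq_zero_or_pos k with rfl | hk
  · simp
  have h1 := jacoF_add_din k hk
  have h2 := jacoF_add_din (k+1) (by omega)
  have := jacoDin_succ_le k
  omega

lemma jacoF_mono : Monotone jacoF := monotone_nat_of_le_succ jacoF_le_succ

lemma jacoDin_le_succ (k : ℕ) : jacoDin k ≤ jacoDin (k + 1) := by
  unfold jacoDin
  apply Finset.card_le_card_of_injOn (fun i => i + 1)
  · intro x hx
    simp only [Finset.mem_coe, Finset.mem_filter, Finset.mem_Ico] at hx ⊢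
    have := jacoF_mono (Nat.le_succ x)
    rw [Nat.succ_eq_add_one] at this
    omega
  · intro a _ b _ hab; simpa using hab

lemma jacoF_one : jacoF 1 = 1 := by
  have h1 := jacoF_add_din 1 le_rfl
  have : jacoDin 1 = 0 := by simp [jacoDin]
  omega

lemma jacoF_succ_le (k : ℕ) : jacoF (k + 1) ≤ jacoF k + 1 := by
  rcases Nat.eq_zero_or_pos k with rfl | hk
  · simp [jacoF_one]
  have h1 := jacoF_add_din k hk
  have h2 := jacoF_add_din (k+1) (by omega)
  have := jacoDin_le_succ k
  omega

lemma jacoF_pos {k : ℕ} (hk : 1 ≤ k) : 1 ≤ jacoF k := by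
  have := jacoF_mono hk
  rwa [jacoF_one] at this

lemma jacoF_le (k : ℕ) : jacoF k ≤ k := by
  rcases Nat.eq_zero_or_pos k with rfl | hk
  · simp
  have := jacoF_add_din k hk
  omega

lemma jacoDeg_card (n j : ℕ) :
    jacoDeg n j = jacoDin j + (min n (j + jacoF j) - j) := by
  unfold jacoDeg
  congr 1
  have : (Finset.Ioc j n).filter (fun k => k ≤ j + jacoF j) =
      Finset.Ioc j (min n (j + jacoF j)) := by
    ext k
    simp only [Finset.mem_filter, Finset.mem_Ioc, le_min_iff]
    omega
  rw [this, Nat.card_Ioc]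

lemma jacoDeg_of_le {n j : ℕ} (hj : 1 ≤ j) (h : j + jacoF j ≤ n) : jacoDeg n j = j := by
  have := jacoF_add_din j hj
  rw [jacoDeg_card]
  omega

lemma jacoDeg_of_ge {n j : ℕ} (hj : 1 ≤ j) (hjn : j ≤ n) (h : n ≤ j + jacoF j) :
    jacoDeg n j = n - jacoF j := by
  have := jacoF_add_din j hj
  rw [jacoDeg_card]
  omega

/-- If `J_n(1)` has a unique Jaconian vertex `v_i`, then the arc `(v_i, v_n)` is present
(i.e. `n ≤ i + f i`) and `Δ(J_n(1)) + d_n(n) = n`. -/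
theorem stmt_12 (n i : ℕ) (hn : 2 ≤ n) (h : jacoJ n = {i}) :
    n ≤ i + jacoF i ∧ jacoDelta n + jacoDeg n n = n := by
  have hex : ∃ k, n ≤ k + jacoF k := ⟨n, Nat.le_add_right n _⟩
  set m' := Nat.find hex with hm'def
  have hm'P : n ≤ m' + jacoF m' := Nat.find_spec hex
  have hmin : ∀ k, k < m' → k + jacoF k < n := by
    intro k hk
    have := Nat.find_min hex hk
    omega
  have hm'n : m' ≤ n := Nat.find_min' hex (Nat.le_add_right n _)
  have hm'1 : 1 ≤ m' := by
    rcases Nat.eq_zero_or_pos m' with h0 | h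
    · rw [h0] at hm'P; simp at hm'P; omega
    · exact h
  have hback : ∀ k, m' ≤ k → n ≤ k + jacoF k := fun k hk =>
    le_trans hm'P (by have := jacoF_mono hk; omega)
  -- f n = m'
  have hfn : jacoF n = m' := by
    have h1 := jacoF_add_din n (by omega)
    have h2 : (Finset.Ico 1 n).filter (fun k => n ≤ k + jacoF k) = Finset.Ico m' n := by
      ext k
      simp only [Finset.mem_filter, Finset.mem_Ico]
      constructor
      · rintro ⟨⟨h1k, h2k⟩, h3k⟩
        refine ⟨?_, h2k⟩
        by_contra hc
        have := hmin k (by omega)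
        omega
      · rintro ⟨h1k, h2k⟩
        exact ⟨⟨by omega, h2k⟩, hback k h1k⟩
    have h3 : jacoDin n = n - m' := by
      unfold jacoDin; rw [h2, Nat.card_Ico]
    omega
  -- the key: m' + f m' = n
  have hmeq : m' + jacoF m' = n := by
    by_contra hne
    have hgt : n + 1 ≤ m' + jacoF m' := by omega
    set m := m' - 1 with hmdef
    have hmlt : m + jacoF m < n := hmin m (by omega)
    have hstep : jacoF m' ≤ jacoF m + 1 := by
      have := jacoF_succ_le m
      rw [show m + 1 = m' by omega] at this
      exact this
    have hmeq' : m + jacoF m = n - 1 := by omega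
    have hm1 : 1 ≤ m := by
      rcases Nat.eq_zero_or_pos m with h0 | h; · rw [h0] at hmeq'; simp at hmeq'; omega
      exact h
    have hub : ∀ j ∈ Finset.Icc 1 n, jacoDeg n j ≤ m := by
      intro j hj
      simp only [Finset.mem_Icc] at hj
      rcases lt_or_ge j m' with hjm | hjm
      · rw [jacoDeg_of_le hj.1 (le_of_lt (hmin j hjm))]
        omega
      · rw [jacoDeg_of_ge (by omega) hj.2 (hback j hjm)]
        have := jacoF_mono hjm
        omega
    have hdegm : jacoDeg n m = m := jacoDeg_of_le hm1 (by omega)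
    have hdegm' : jacoDeg n m' = m := by
      rw [jacoDeg_of_ge hm'1 hm'n hm'P]
      omega
    have hDelta : jacoDelta n = m := by
      apply le_antisymm (Finset.sup_le hub)
      calc m = jacoDeg n m := hdegm.symm
      _ ≤ _ := Finset.le_sup (Finset.mem_Icc.mpr ⟨hm1, by omega⟩)
    have hmem1 : m ∈ jacoJ n := by
      unfold jacoJ
      simp only [Finset.mem_filter, Finset.mem_Icc]
      exact ⟨⟨hm1, by omega⟩, by rw [hdegm, hDelta]⟩
    have hmem2 : m' ∈ jacoJ n := by
      unfold jacoJ
      simp only [Finset.mem_filter, Finset.mem_Icc]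
      exact ⟨⟨hm'1, hm'n⟩, by rw [hdegm', hDelta]⟩
    rw [h, Finset.mem_singleton] at hmem1 hmem2
    omega
  -- now degree bound and Δ = m'
  have hub : ∀ j ∈ Finset.Icc 1 n, jacoDeg n j ≤ m' := by
    intro j hj
    simp only [Finset.mem_Icc] at hj
    rcases lt_or_ge j m' with hjm | hjm
    · rw [jacoDeg_of_le hj.1 (le_of_lt (hmin j hjm))]
      omega
    · rw [jacoDeg_of_ge (by omega) hj.2 (hback j hjm)]
      have := jacoF_mono hjm
      omega
  have hdegm' : jacoDeg n m' = m' := by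
    rw [jacoDeg_of_ge hm'1 hm'n hm'P]
    omega
  have hDelta : jacoDelta n = m' := by
    apply le_antisymm (Finset.sup_le hub)
    calc m' = jacoDeg n m' := hdegm'.symm
    _ ≤ _ := Finset.le_sup (Finset.mem_Icc.mpr ⟨hm'1, hm'n⟩)
  have hmem : m' ∈ jacoJ n := by
    unfold jacoJ
    simp only [Finset.mem_filter, Finset.mem_Icc]
    exact ⟨⟨hm'1, hm'n⟩, by rw [hdegm', hDelta]⟩
  rw [h, Finset.mem_singleton] at hmem
  subst hmem
  have hdegn : jacoDeg n n = n - jacoF n := jacoDeg_of_ge (by omega) le_rfl (Nat.le_add_right _ _)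
  constructor
  · omega
  · rw [hDelta, hdegn, hfn]
    omega
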